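/- Let Q ⊆ ℝ^n be a polytope, let c, v ∈ ℝ^n with v ≠ 0, and let x^0, x^1, …, x^k be a Shadow-rule path on Q with auxiliary vector v and objective c whose starting vertex x^0 maximizes ⟨c,·⟩ over the v-minimal face F = {x ∈ Q : ⟨v,x⟩ = min_{y ∈ Q} ⟨v,y⟩}. Then there exists an index i with 0 ≤ i ≤ k such that x^i maximizes ⟨c,·⟩ over Q and ⟨c, x^j⟩ < ⟨c, x^{j+1}⟩ for every j < i; in particular, the initial segment of the path up to x^i is both strictly v-monotone and strictly c-monotone. -/

import Mathlib

open Finset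

attribute [local instance] Classical.propDecidable

noncomputable section

/-- Standard dot product on `Fin n → ℝ`. -/
def dotR {n : ℕ} (c x : Fin n → ℝ) : ℝ := ∑ i, c i * x i

/-- A polytope: the convex hull of a finite nonempty set of points. -/
def IsPolytope {n : ℕ} (P : Set (Fin n → ℝ)) : Prop :=
  ∃ V : Finset (Fin n → ℝ), V.Nonempty ∧ P = convexHull ℝ (V : Set (Fin n → ℝ))

/-- A 0/1 polytope: the convex hull of a finite nonempty subset of `{0,1}^n`. -/
def IsPolytope01 {n : ℕ} (P : Set (Fin n → ℝ)) : Prop :=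
  ∃ V : Finset (Fin n → ℝ), V.Nonempty ∧ (∀ w ∈ V, ∀ i, w i = 0 ∨ w i = 1) ∧
    P = convexHull ℝ (V : Set (Fin n → ℝ))

/-- A vertex of `P` is an extreme point of `P`. -/
def IsVertex {n : ℕ} (P : Set (Fin n → ℝ)) (x : Fin n → ℝ) : Prop :=
  x ∈ P.extremePoints ℝ

/-- Two distinct vertices are adjacent when the segment between them is a face. -/
def Adjacent {n : ℕ} (P : Set (Fin n → ℝ)) (x y : Fin n → ℝ) : Prop :=
  IsVertex P x ∧ IsVertex P y ∧ x ≠ y ∧ IsExtreme ℝ P (segment ℝ x y)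

/-- `u` is a `w`-improving neighbor of `x`. -/
def ImpNbr {n : ℕ} (P : Set (Fin n → ℝ)) (w x u : Fin n → ℝ) : Prop :=
  Adjacent P x u ∧ dotR w x < dotR w u

/-- A Shadow-rule path on `P` with auxiliary vector `v` and objective `c`:
vertices `x 0, …, x k`, each step a `v`-improving neighbor maximizing the slope
`⟨c, u − xᵢ⟩ / ⟨v, u − xᵢ⟩` over all `v`-improving neighbors, and the last vertex
has no `v`-improving neighbor. -/
def ShadowPath {n : ℕ} (P : Set (Fin n → ℝ)) (c v : Fin n → ℝ) (k : ℕ)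
    (x : ℕ → Fin n → ℝ) : Prop :=
  (∀ i ≤ k, IsVertex P (x i)) ∧
  (∀ i < k, ImpNbr P v (x i) (x (i + 1)) ∧
    ∀ u, ImpNbr P v (x i) u →
      dotR c (u - x i) / dotR v (u - x i)
        ≤ dotR c (x (i + 1) - x i) / dotR v (x (i + 1) - x i)) ∧
  (∀ u, ¬ ImpNbr P v (x k) u)

/-- `f(u)` relative to `x0`: the largest index (in `1, …, n` labelling) where `u`
differs from `x0`, and `0` if there is none. -/
def lastIdx {n : ℕ} (x0 u : Fin n → ℝ) : ℕ :=
  (Finset.univ.filter fun j : Fin n => u j ≠ x0 j).sup fun j => (j : ℕ) + 1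

/-- `f(w)` for a 0/1 vector: the largest index (in `1, …, n` labelling) with
`w j = 1`, and `0` for the zero vector. -/
def lastOne {n : ℕ} (w : Fin n → ℝ) : ℕ :=
  (Finset.univ.filter fun j : Fin n => w j = 1).sup fun j => (j : ℕ) + 1

variable {n : ℕ}

lemma dotR_sub (w a b : Fin n → ℝ) : dotR w (a - b) = dotR w a - dotR w b := by
  simp [dotR, mul_sub, Finset.sum_sub_distrib]

lemma dotR_sub_left (a b z : Fin n → ℝ) : dotR (a - b) z = dotR a z - dotR b z := by
  simp [dotR, sub_mul, Finset.sum_sub_distrib]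

lemma dotR_add_left (a b z : Fin n → ℝ) : dotR (a + b) z = dotR a z + dotR b z := by
  simp [dotR, add_mul, Finset.sum_add_distrib]

lemma dotR_smul_left (t : ℝ) (a z : Fin n → ℝ) : dotR (t • a) z = t * dotR a z := by
  simp [dotR, Finset.mul_sum, mul_assoc]

lemma dotR_smul (t : ℝ) (a z : Fin n → ℝ) : dotR a (t • z) = t * dotR a z := by
  simp [dotR, Finset.mul_sum]; exact Finset.sum_congr rfl fun i _ => by ring

lemma dotR_comm (a b : Fin n → ℝ) : dotR a b = dotR b a := by
  simp [dotR, mul_comm]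

lemma dotR_self_pos {u : Fin n → ℝ} (hu : u ≠ 0) : 0 < dotR u u := by
  have h1 : 0 ≤ dotR u u := Finset.sum_nonneg fun i _ => mul_self_nonneg _
  rcases h1.lt_or_eq with h | h
  · exact h
  · exfalso; apply hu
    funext i
    have := (Finset.sum_eq_zero_iff_of_nonneg (fun i _ => mul_self_nonneg (u i))).1 h.symm i (Finset.mem_univ i)
    have := mul_self_eq_zero.1 this
    simpa using this

/-- Dot product as a linear map. -/
def dotL (g : Fin n → ℝ) : (Fin n → ℝ) →ₗ[ℝ] ℝ where
  toFun := dotR g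
  map_add' a b := by simp [dotR, mul_add, Finset.sum_add_distrib]
  map_smul' t a := by simp [dotR, Finset.mul_sum]; exact Finset.sum_congr rfl fun i _ => by ring

@[simp] lemma dotL_apply (g z : Fin n → ℝ) : dotL g z = dotR g z := rfl

/-- A linear bound on a finite set extends to its convex hull. -/
lemma le_of_forall_le_hull {W : Finset (Fin n → ℝ)} {φ : (Fin n → ℝ) →ₗ[ℝ] ℝ} {M : ℝ}
    (hM : ∀ w ∈ W, φ w ≤ M) : ∀ p ∈ convexHull ℝ (W : Set (Fin n → ℝ)), φ p ≤ M := by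
  intro p hp
  have hsub : convexHull ℝ (W : Set (Fin n → ℝ)) ⊆ {z | φ z ≤ M} :=
    convexHull_min (fun w hw => hM w (Finset.mem_coe.1 hw)) (convex_halfSpace_le φ.isLinear M)
  exact hsub hp

/-- Equality case: a point of the hull where a linear functional attains its max lies in
the hull of the maximizers. -/
lemma mem_hull_filter_eq {W : Finset (Fin n → ℝ)} {φ : (Fin n → ℝ) →ₗ[ℝ] ℝ} {M : ℝ}
    (hM : ∀ w ∈ W, φ w ≤ M) {p : Fin n → ℝ} (hp : p ∈ convexHull ℝ (W : Set (Fin n → ℝ)))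
    (hpM : φ p = M) :
    p ∈ convexHull ℝ ((W.filter fun w => φ w = M : Finset (Fin n → ℝ)) : Set (Fin n → ℝ)) := by
  rw [Finset.convexHull_eq] at hp ⊢
  obtain ⟨wt, hw0, hw1, hcm⟩ := hp
  have hcm' : ∑ y ∈ W, wt y • y = p := by
    rw [← hcm, Finset.centerMass_eq_of_sum_1 _ _ hw1]; rfl
  have hφp : ∑ y ∈ W, wt y * φ y = M := by
    rw [← hpM, ← hcm']
    rw [map_sum]
    simp [smul_eq_mul]
  have hzero : ∀ y ∈ W, wt y * (M - φ y) = 0 := by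
    have hsum : ∑ y ∈ W, wt y * (M - φ y) = 0 := by
      have : ∑ y ∈ W, wt y * (M - φ y) = M * (∑ y ∈ W, wt y) - ∑ y ∈ W, wt y * φ y := by
        rw [Finset.mul_sum, ← Finset.sum_sub_distrib]; congr 1; ext y; ring
      rw [this, hw1, hφp]; ring
    exact (Finset.sum_eq_zero_iff_of_nonneg fun y hy =>
      mul_nonneg (hw0 y hy) (sub_nonneg.2 (hM y hy))).1 hsum
  have hvanish : ∀ y ∈ W, y ∉ W.filter (fun w => φ w = M) → wt y = 0 := by
    intro y hy hyf
    have hne : φ y ≠ M := by simp [Finset.mem_filter, hy] at hyf; exact hyf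
    have := hzero y hy
    rcases mul_eq_zero.1 this with h | h
    · exact h
    · exact absurd (by linarith [sub_eq_zero.1 h] : φ y = M) hne
  refine ⟨wt, fun y hy => hw0 y (Finset.mem_of_mem_filter y hy), ?_, ?_⟩
  · rw [← hw1]
    exact Finset.sum_subset (Finset.filter_subset _ _) fun y hy hyf => hvanish y hy hyf
  · rw [Finset.centerMass_eq_of_sum_1]
    · show ∑ y ∈ _, wt y • y = p
      rw [← hcm']
      exact Finset.sum_subset (Finset.filter_subset _ _) fun y hy hyf => by
        rw [hvanish y hy hyf, zero_smul]
    · rw [← hw1]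
      exact Finset.sum_subset (Finset.filter_subset _ _) fun y hy hyf => hvanish y hy hyf

/-- The maximizer face of a linear functional is an extreme subset. -/
lemma isExtreme_hull_filter {W : Finset (Fin n → ℝ)} {φ : (Fin n → ℝ) →ₗ[ℝ] ℝ} {M : ℝ}
    (hM : ∀ w ∈ W, φ w ≤ M) :
    IsExtreme ℝ (convexHull ℝ (W : Set (Fin n → ℝ)))
      (convexHull ℝ ((W.filter fun w => φ w = M : Finset (Fin n → ℝ)) : Set (Fin n → ℝ))) := by
  have hMeq : ∀ p ∈ convexHull ℝ ((W.filter fun w => φ w = M : Finset (Fin n → ℝ)) :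
      Set (Fin n → ℝ)), φ p = M := by
    intro p hp
    have hsub : convexHull ℝ ((W.filter fun w => φ w = M : Finset (Fin n → ℝ)) :
        Set (Fin n → ℝ)) ⊆ {z | φ z = M} :=
      convexHull_min (fun w hw => (Finset.mem_filter.1 (Finset.mem_coe.1 hw)).2)
        (convex_hyperplane φ.isLinear M)
    exact hsub hp
  constructor
  · exact convexHull_mono (by exact_mod_cast Finset.filter_subset _ _)
  · rintro x₁ hx₁ x₂ hx₂ p hp hop
    obtain ⟨a, b, ha, hb, hab, hx⟩ := hop
    have hpM : φ p = M := hMeq p hp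
    have h1 : φ x₁ ≤ M := le_of_forall_le_hull hM x₁ hx₁
    have h2 : φ x₂ ≤ M := le_of_forall_le_hull hM x₂ hx₂
    have hcomb : a * φ x₁ + b * φ x₂ = M := by
      rw [← hpM, ← hx]; simp [map_add, map_smul, smul_eq_mul]
    have e1 : φ x₁ = M := by
      by_contra hne
      have hlt : φ x₁ < M := lt_of_le_of_ne h1 hne
      have hM1 : a * M + b * M = M := by rw [← add_mul, hab, one_mul]
      nlinarith [mul_lt_mul_of_pos_left hlt ha, mul_le_mul_of_nonneg_left h2 hb.le]
    have e2 : φ x₂ = M := by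
      by_contra hne
      have hlt : φ x₂ < M := lt_of_le_of_ne h2 hne
      have hM1 : a * M + b * M = M := by rw [← add_mul, hab, one_mul]
      nlinarith [mul_lt_mul_of_pos_left hlt hb, mul_le_mul_of_nonneg_left h1 ha.le]
    exact mem_hull_filter_eq hM hx₁ e1

lemma hull_erase_eq {W : Finset (Fin n → ℝ)} {w₀ : Fin n → ℝ}
    (h : w₀ ∈ convexHull ℝ ((W.erase w₀ : Finset (Fin n → ℝ)) : Set (Fin n → ℝ))) :
    convexHull ℝ (W : Set (Fin n → ℝ))
      = convexHull ℝ ((W.erase w₀ : Finset (Fin n → ℝ)) : Set (Fin n → ℝ)) := by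
  apply Set.Subset.antisymm
  · apply convexHull_min _ (convex_convexHull ℝ _)
    intro y hy
    rcases eq_or_ne y w₀ with rfl | hne
    · exact h
    · exact subset_convexHull ℝ _ (by
        simp only [Finset.coe_erase, Set.mem_diff, Set.mem_singleton_iff]
        exact ⟨hy, hne⟩)
  · exact convexHull_mono (by exact_mod_cast Finset.erase_subset _ _)

lemma vertex_spec {W : Finset (Fin n → ℝ)} {x : Fin n → ℝ}
    (hx : x ∈ (convexHull ℝ (W : Set (Fin n → ℝ))).extremePoints ℝ) :
    x ∈ W ∧ x ∉ convexHull ℝ ((W.erase x : Finset (Fin n → ℝ)) : Set (Fin n → ℝ)) := by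
  have hxW : x ∈ W := by
    have := extremePoints_convexHull_subset hx
    exact_mod_cast this
  refine ⟨hxW, fun hmem => ?_⟩
  rw [hull_erase_eq hmem] at hx
  have := extremePoints_convexHull_subset hx
  simp at this

lemma exists_exposing {W : Finset (Fin n → ℝ)} {x : Fin n → ℝ} (hx : x ∈ W)
    (h : x ∉ convexHull ℝ ((W.erase x : Finset (Fin n → ℝ)) : Set (Fin n → ℝ))) :
    ∃ φ : (Fin n → ℝ) →ₗ[ℝ] ℝ, ∀ y ∈ W, y ≠ x → φ y < φ x := by
  obtain ⟨f, u, hfx, hf⟩ := geometric_hahn_banach_point_closed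
    (convex_convexHull ℝ _) ((W.erase x).finite_toSet.isClosed_convexHull (𝕜 := ℝ)) h
  refine ⟨-f.toLinearMap, fun y hy hyx => ?_⟩
  have hy' : y ∈ convexHull ℝ ((W.erase x : Finset (Fin n → ℝ)) : Set (Fin n → ℝ)) :=
    subset_convexHull ℝ _ (by exact_mod_cast Finset.mem_erase.2 ⟨hyx, hy⟩)
  have := hf y hy'
  simp only [LinearMap.neg_apply, ContinuousLinearMap.coe_coe, neg_lt_neg_iff]
  linarith

lemma extreme_of_not_mem_erase {W : Finset (Fin n → ℝ)} {x : Fin n → ℝ} (hxW : x ∈ W)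
    (h : x ∉ convexHull ℝ ((W.erase x : Finset (Fin n → ℝ)) : Set (Fin n → ℝ))) :
    x ∈ (convexHull ℝ (W : Set (Fin n → ℝ))).extremePoints ℝ := by
  obtain ⟨φ, hφ⟩ := exists_exposing hxW h
  have hM : ∀ w ∈ W, φ w ≤ φ x := fun w hw => by
    rcases eq_or_ne w x with rfl | hne
    · exact le_rfl
    · exact (hφ w hw hne).le
  have hfilt : (W.filter fun w => φ w = φ x) = {x} := by
    ext w
    simp only [Finset.mem_filter, Finset.mem_singleton]
    constructor
    · rintro ⟨hwW, hw⟩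
      by_contra hne
      exact absurd hw (ne_of_lt (hφ w hwW hne))
    · rintro rfl; exact ⟨hxW, rfl⟩
  refine ⟨subset_convexHull ℝ _ (by exact_mod_cast hxW), ?_⟩
  intro x₁ hx₁ x₂ hx₂ hop
  obtain ⟨a, b, ha, hb, hab, hxeq⟩ := hop
  have h1 : φ x₁ ≤ φ x := le_of_forall_le_hull hM x₁ hx₁
  have h2 : φ x₂ ≤ φ x := le_of_forall_le_hull hM x₂ hx₂
  have hcomb : a * φ x₁ + b * φ x₂ = φ x := by
    rw [← hxeq]; simp [map_add, map_smul, smul_eq_mul]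
  have e1 : φ x₁ = φ x := by
    by_contra hne
    have hlt : φ x₁ < φ x := lt_of_le_of_ne h1 hne
    have hM1 : a * φ x + b * φ x = φ x := by rw [← add_mul, hab, one_mul]
    nlinarith [mul_lt_mul_of_pos_left hlt ha, mul_le_mul_of_nonneg_left h2 hb.le]
  have e2 : φ x₂ = φ x := by
    by_contra hne
    have hlt : φ x₂ < φ x := lt_of_le_of_ne h2 hne
    have hM1 : a * φ x + b * φ x = φ x := by rw [← add_mul, hab, one_mul]
    nlinarith [mul_lt_mul_of_pos_left hlt hb, mul_le_mul_of_nonneg_left h1 ha.le]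
  have m1 := mem_hull_filter_eq hM hx₁ e1
  have m2 := mem_hull_filter_eq hM hx₂ e2
  rw [hfilt] at m1 m2
  simp only [Finset.coe_singleton, convexHull_singleton, Set.mem_singleton_iff] at m1 m2
  exact m1

lemma mem_extremePoints_of_subset {A B : Set (Fin n → ℝ)} (hBA : B ⊆ A) {x : Fin n → ℝ}
    (hx : x ∈ A.extremePoints ℝ) (hxB : x ∈ B) : x ∈ B.extremePoints ℝ :=
  ⟨hxB, fun x₁ h1 x₂ h2 hop => hx.2 (hBA h1) (hBA h2) hop⟩

/-- Rotation lemma: rotating from an exposing functional `ℓ` towards `g` until the first tie. -/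
lemma rotate {W : Finset (Fin n → ℝ)} {x z : Fin n → ℝ} (hz : z ∈ W)
    {ℓ g : (Fin n → ℝ) →ₗ[ℝ] ℝ} (hℓ : ∀ y ∈ W, y ≠ x → ℓ y < ℓ x) (hg : g x < g z) :
    ∃ t : ℝ, 0 < t ∧
      (∀ y ∈ W, g y + t * ℓ y ≤ g x + t * ℓ x) ∧
      (∃ y ∈ W, y ≠ x ∧ g y + t * ℓ y = g x + t * ℓ x) ∧
      (∀ y ∈ W, y ≠ x → g y + t * ℓ y = g x + t * ℓ x →
        g x < g y ∧ g y - g x = t * (ℓ x - ℓ y)) := by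
  have hzx : z ≠ x := fun h => absurd hg (by rw [h]; exact lt_irrefl _)
  set S := W.filter (fun y => g x < g y) with hS
  have hzS : z ∈ S := Finset.mem_filter.2 ⟨hz, hg⟩
  have hSne : S.Nonempty := ⟨z, hzS⟩
  have hSprop : ∀ y ∈ S, y ≠ x ∧ 0 < ℓ x - ℓ y := by
    intro y hy
    obtain ⟨hyW, hgy⟩ := Finset.mem_filter.1 hy
    have hyx : y ≠ x := fun h => absurd hgy (by rw [h]; exact lt_irrefl _)
    exact ⟨hyx, sub_pos.2 (hℓ y hyW hyx)⟩
  set t := S.sup' hSne (fun y => (g y - g x) / (ℓ x - ℓ y)) with ht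
  have htpos : 0 < t := by
    have hle := Finset.le_sup' (fun y => (g y - g x) / (ℓ x - ℓ y)) hzS
    have : 0 < (g z - g x) / (ℓ x - ℓ z) :=
      div_pos (sub_pos.2 hg) (hSprop z hzS).2
    linarith
  refine ⟨t, htpos, ?_, ?_, ?_⟩
  · intro y hyW
    rcases eq_or_ne y x with rfl | hyx
    · exact le_rfl
    rcases le_or_gt (g y) (g x) with hgy | hgy
    · have hℓy := hℓ y hyW hyx
      nlinarith
    · have hyS : y ∈ S := Finset.mem_filter.2 ⟨hyW, hgy⟩
      have hle := Finset.le_sup' (fun y => (g y - g x) / (ℓ x - ℓ y)) hyS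
      have hden := (hSprop y hyS).2
      have := (div_le_iff₀ hden).1 hle
      linarith
  · obtain ⟨y, hyS, hysup⟩ := Finset.exists_mem_eq_sup' hSne (fun y => (g y - g x) / (ℓ x - ℓ y))
    obtain ⟨hyx, hden⟩ := hSprop y hyS
    refine ⟨y, Finset.mem_of_mem_filter y hyS, hyx, ?_⟩
    have htr : t = (g y - g x) / (ℓ x - ℓ y) := hysup
    have : g y - g x = t * (ℓ x - ℓ y) := by
      rw [htr, div_mul_cancel₀ _ (ne_of_gt hden)]
    linarith
  · intro y hyW hyx heq
    have hgxy : g x < g y := by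
      by_contra hle
      push_neg at hle
      have hℓy := hℓ y hyW hyx
      nlinarith
    exact ⟨hgxy, by linarith⟩


/-- Every vertex of a polytope that is not the whole polytope has an adjacent vertex. -/
lemma exists_adjacent_vertex :
    ∀ (N : ℕ) (W : Finset (Fin n → ℝ)), W.card ≤ N →
    ∀ x, x ∈ (convexHull ℝ (W : Set (Fin n → ℝ))).extremePoints ℝ →
    ∀ z ∈ convexHull ℝ (W : Set (Fin n → ℝ)), z ≠ x →
    ∃ u, u ∈ (convexHull ℝ (W : Set (Fin n → ℝ))).extremePoints ℝ ∧ u ≠ x ∧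
      IsExtreme ℝ (convexHull ℝ (W : Set (Fin n → ℝ))) (segment ℝ x u) := by
  intro N
  induction N with
  | zero =>
    intro W hc x hx z hz hzx
    have : W = ∅ := Finset.card_eq_zero.1 (Nat.le_zero.1 hc)
    subst this
    have := extremePoints_subset hx
    simp at this
  | succ N ih =>
    intro W hc x hx z hz hzx
    obtain ⟨hxW, hxe⟩ := vertex_spec hx
    by_cases hprune : ∃ w₀ ∈ W, w₀ ∈ convexHull ℝ ((W.erase w₀ : Finset (Fin n → ℝ)) : Set (Fin n → ℝ))
    · obtain ⟨w₀, hw₀W, hw₀⟩ := hprune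
      have heq := hull_erase_eq hw₀
      have hcard : (W.erase w₀).card ≤ N := by
        rw [Finset.card_erase_of_mem hw₀W]
        have : 1 ≤ W.card := Finset.card_pos.2 ⟨w₀, hw₀W⟩
        omega
      rw [heq] at hx hz ⊢
      exact ih (W.erase w₀) hcard x hx z hz hzx
    · push_neg at hprune
      have hext : ∀ w ∈ W, w ∈ (convexHull ℝ (W : Set (Fin n → ℝ))).extremePoints ℝ :=
        fun w hw => extreme_of_not_mem_erase hw (hprune w hw)
      by_cases h2 : ∀ w ∈ W.erase x, ∀ w' ∈ W.erase x, w = w'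
      · -- degenerate case: at most one other point
        rcases Finset.eq_empty_or_nonempty (W.erase x) with hemp | ⟨u, hu⟩
        · -- W = {x}
          exfalso
          have hWx : W = {x} := by
            ext w
            simp only [Finset.mem_singleton]
            constructor
            · intro hw
              by_contra hne
              have : w ∈ W.erase x := Finset.mem_erase.2 ⟨hne, hw⟩
              simp [hemp] at this
            · rintro rfl; exact hxW
          rw [hWx] at hz
          simp only [Finset.coe_singleton, convexHull_singleton, Set.mem_singleton_iff] at hz
          exact hzx hz
        · -- W = {x, u}
          have hux : u ≠ x := (Finset.mem_erase.1 hu).1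
          have hWxu : (W : Set (Fin n → ℝ)) = {x, u} := by
            ext w
            simp only [Finset.mem_coe, Set.mem_insert_iff, Set.mem_singleton_iff]
            constructor
            · intro hw
              by_cases hne : w = x
              · exact Or.inl hne
              · exact Or.inr (h2 w (Finset.mem_erase.2 ⟨hne, hw⟩) u hu)
            · rintro (rfl | rfl)
              · exact hxW
              · exact Finset.mem_of_mem_erase hu
          refine ⟨u, hext u (Finset.mem_of_mem_erase hu), hux, ?_⟩
          rw [hWxu, convexHull_pair]
      · -- main case: at least two other points, all of W consists of vertices
        push_neg at h2
        obtain ⟨y, hy, y', hy', hyy'⟩ := h2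
        have hyW : y ∈ W := Finset.mem_of_mem_erase hy
        have hy'W : y' ∈ W := Finset.mem_of_mem_erase hy'
        have hyx : y ≠ x := (Finset.mem_erase.1 hy).1
        have hy'x : y' ≠ x := (Finset.mem_erase.1 hy').1
        obtain ⟨φ, hφ⟩ := exists_exposing hxW hxe
        set a := φ x - φ y' with ha_def
        set b := φ x - φ y with hb_def
        have ha : 0 < a := sub_pos.2 (hφ y' hy'W hy'x)
        have hb : 0 < b := sub_pos.2 (hφ y hyW hyx)
        set d := a • (y - x) - b • (y' - x) with hd_def
        have hd : d ≠ 0 := by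
          intro hd0
          have heq0 : a • (y - x) = b • (y' - x) := sub_eq_zero.1 hd0
          have heq : y - x = (b / a) • (y' - x) := by
            have h' := congrArg (fun w => (a⁻¹ : ℝ) • w) heq0
            simpa [smul_smul, inv_mul_cancel₀ (ne_of_gt ha), div_eq_inv_mul] using h'
          set μ := b / a with hμ_def
          have hμ : 0 < μ := div_pos hb ha
          rcases lt_trichotomy μ 1 with hμ1 | hμ1 | hμ1
          · have hyeq : (1 - μ) • x + μ • y' = y := by
              calc (1 - μ) • x + μ • y' = x + μ • (y' - x) := by
                    rw [smul_sub, sub_smul, one_smul]; abel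
                _ = x + (y - x) := by rw [← heq]
                _ = y := by abel
            have hyos : y ∈ openSegment ℝ x y' :=
              ⟨1 - μ, μ, by linarith, hμ, by ring, hyeq⟩
            have := ((hext y hyW).2 (subset_convexHull ℝ _ (Finset.mem_coe.2 hxW))
              (subset_convexHull ℝ _ (Finset.mem_coe.2 hy'W)) hyos)
            exact hyx this.symm
          · rw [hμ1, one_smul] at heq
            apply hyy'
            have h' := congrArg (fun w => w + x) heq
            simpa using h'
          · have hμinv : 0 < μ⁻¹ := inv_pos.2 hμ
            have hμinv1 : μ⁻¹ < 1 := by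
              rw [inv_lt_one_iff₀]; right; exact hμ1
            have heq' : y' - x = μ⁻¹ • (y - x) := by
              rw [heq, smul_smul, inv_mul_cancel₀ (ne_of_gt hμ), one_smul]
            have hy'eq : (1 - μ⁻¹) • x + μ⁻¹ • y = y' := by
              calc (1 - μ⁻¹) • x + μ⁻¹ • y = x + μ⁻¹ • (y - x) := by
                    rw [smul_sub, sub_smul, one_smul]; abel
                _ = x + (y' - x) := by rw [← heq']
                _ = y' := by abel
            have hy'os : y' ∈ openSegment ℝ x y :=
              ⟨1 - μ⁻¹, μ⁻¹, by linarith, hμinv, by ring, hy'eq⟩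
            have := ((hext y' hy'W).2 (subset_convexHull ℝ _ (Finset.mem_coe.2 hxW))
              (subset_convexHull ℝ _ (Finset.mem_coe.2 hyW)) hy'os)
            exact hy'x this.symm
        have hyx0 : y - x ≠ 0 := sub_ne_zero.2 hyx
        obtain ⟨g, hgd, hgy⟩ : ∃ g : Fin n → ℝ, dotR g d ≠ 0 ∧ 0 < dotR g (y - x) := by
          by_cases hB : dotR (y - x) d = 0
          · set A := dotR d (y - x) with hA_def
            set S := dotR (y - x) (y - x) with hS_def
            have hSpos : 0 < S := dotR_self_pos hyx0
            refine ⟨(2 * (|A| + 1)) • (y - x) + S • d, ?_, ?_⟩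
            · rw [dotR_add_left, dotR_smul_left, dotR_smul_left, hB, mul_zero, zero_add]
              exact ne_of_gt (mul_pos hSpos (dotR_self_pos hd))
            · rw [dotR_add_left, dotR_smul_left, dotR_smul_left, ← hS_def, ← hA_def]
              nlinarith [abs_nonneg A, neg_abs_le A, hSpos]
          · exact ⟨y - x, hB, dotR_self_pos hyx0⟩
        have hgsub : dotR g y - dotR g x = dotR g (y - x) := (dotR_sub g y x).symm
        have hg : (dotL g) x < (dotL g) y := by
          simp only [dotL_apply]
          linarith [hgy, hgsub]
        obtain ⟨t, htpos, hle, ⟨ystar, hystarW, hystarx, hystar⟩, hchar⟩ :=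
          rotate (ℓ := φ) (g := dotL g) hyW hφ hg
        set f := dotL g + t • φ with hf_def
        have hfval : ∀ p, f p = dotR g p + t * φ p := fun p => by
          simp [hf_def, smul_eq_mul]
        have hMf : ∀ w ∈ W, f w ≤ f x := by
          intro w hw; rw [hfval, hfval]; exact hle w hw
        set W' := W.filter (fun w => f w = f x) with hW'_def
        have hface : IsExtreme ℝ (convexHull ℝ (W : Set (Fin n → ℝ)))
            (convexHull ℝ (W' : Set (Fin n → ℝ))) := isExtreme_hull_filter hMf
        have hxW' : x ∈ W' := Finset.mem_filter.2 ⟨hxW, rfl⟩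
        have hystarW' : ystar ∈ W' := Finset.mem_filter.2 ⟨hystarW, by
          rw [hfval, hfval]; exact hystar⟩
        have hmiss : y ∉ W' ∨ y' ∉ W' := by
          by_contra hboth
          push_neg at hboth
          obtain ⟨hyW', hy'W'⟩ := hboth
          have hcy := (hchar y hyW hyx (by
            have h' := (Finset.mem_filter.1 hyW').2
            rw [hfval, hfval] at h'; exact h')).2
          have hcy' := (hchar y' hy'W hy'x (by
            have h' := (Finset.mem_filter.1 hy'W').2
            rw [hfval, hfval] at h'; exact h')).2
          simp only [dotL_apply] at hcy hcy'
          have hdcomp : dotR g d = a * (dotR g y - dotR g x) - b * (dotR g y' - dotR g x) := by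
            rw [hd_def, dotR_sub, dotR_smul, dotR_smul, dotR_sub g y x, dotR_sub g y' x]
          apply hgd
          rw [hdcomp, hcy, hcy']
          ring
        have hW'ss : W' ⊂ W := by
          refine Finset.ssubset_iff_subset_ne.2 ⟨Finset.filter_subset _ _, ?_⟩
          intro hWW'
          rcases hmiss with hm | hm
          · exact hm (hWW' ▸ hyW)
          · exact hm (hWW' ▸ hy'W)
        have hcard' : W'.card ≤ N := by
          have := Finset.card_lt_card hW'ss
          omega
        have hxext' : x ∈ (convexHull ℝ (W' : Set (Fin n → ℝ))).extremePoints ℝ :=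
          mem_extremePoints_of_subset
            (convexHull_mono (by exact_mod_cast Finset.filter_subset _ _)) hx
            (subset_convexHull ℝ _ (Finset.mem_coe.2 hxW'))
        obtain ⟨u, hu_ext, hux, hseg⟩ := ih W' hcard' x hxext'
          ystar (subset_convexHull ℝ _ (Finset.mem_coe.2 hystarW')) hystarx
        exact ⟨u, hface.extremePoints_subset_extremePoints hu_ext, hux, hface.trans hseg⟩


/-- A vertex with no `w`-improving neighbor maximizes `w` over the polytope. -/
lemma max_of_no_improving {W : Finset (Fin n → ℝ)} (hW : W.Nonempty) {x w : Fin n → ℝ}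
    (hx : IsVertex (convexHull ℝ (W : Set (Fin n → ℝ))) x)
    (h : ∀ u, ¬ ImpNbr (convexHull ℝ (W : Set (Fin n → ℝ))) w x u) :
    ∀ z ∈ convexHull ℝ (W : Set (Fin n → ℝ)), dotR w z ≤ dotR w x := by
  by_contra hcon
  push_neg at hcon
  obtain ⟨z, hzQ, hzgt⟩ := hcon
  obtain ⟨z', hz'W, hz'⟩ := Finset.exists_mem_eq_sup' hW (fun p => dotR w p)
  have hsup : ∀ p ∈ convexHull ℝ (W : Set (Fin n → ℝ)),
      dotR w p ≤ W.sup' hW (fun p => dotR w p) := by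
    intro p hp
    exact le_of_forall_le_hull (φ := dotL w)
      (fun q hq => Finset.le_sup' (fun p => dotR w p) hq) p hp
  have hz'gt : dotR w x < dotR w z' := by
    have h1 := hsup z hzQ
    rw [hz'] at h1
    linarith
  obtain ⟨hxW, hxe⟩ := vertex_spec hx
  obtain ⟨φ, hφ⟩ := exists_exposing hxW hxe
  have hg : (dotL w) x < (dotL w) z' := hz'gt
  obtain ⟨t, htpos, hle, ⟨ystar, hystarW, hystarx, hystar⟩, hchar⟩ :=
    rotate (ℓ := φ) (g := dotL w) hz'W hφ hg
  set f := dotL w + t • φ with hf_def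
  have hfval : ∀ p, f p = dotR w p + t * φ p := fun p => by
    simp [hf_def, smul_eq_mul]
  have hMf : ∀ q ∈ W, f q ≤ f x := by
    intro q hq; rw [hfval, hfval]; exact hle q hq
  set W' := W.filter (fun q => f q = f x) with hW'_def
  have hface : IsExtreme ℝ (convexHull ℝ (W : Set (Fin n → ℝ)))
      (convexHull ℝ (W' : Set (Fin n → ℝ))) := isExtreme_hull_filter hMf
  have hxW' : x ∈ W' := Finset.mem_filter.2 ⟨hxW, rfl⟩
  have hystarW' : ystar ∈ W' := Finset.mem_filter.2 ⟨hystarW, by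
    rw [hfval, hfval]; exact hystar⟩
  have hxext' : x ∈ (convexHull ℝ (W' : Set (Fin n → ℝ))).extremePoints ℝ :=
    mem_extremePoints_of_subset
      (convexHull_mono (by exact_mod_cast Finset.filter_subset _ _)) hx
      (subset_convexHull ℝ _ (Finset.mem_coe.2 hxW'))
  obtain ⟨u, hu_ext, hux, hseg⟩ := exists_adjacent_vertex W'.card W' le_rfl x hxext'
    ystar (subset_convexHull ℝ _ (Finset.mem_coe.2 hystarW')) hystarx
  have huW' : u ∈ W' := by
    have := extremePoints_convexHull_subset hu_ext
    exact_mod_cast this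
  have hugt : dotR w x < dotR w u := by
    have h' := (Finset.mem_filter.1 huW').2
    rw [hfval, hfval] at h'
    exact (hchar u (Finset.mem_of_mem_filter u huW') hux h').1
  exact h u ⟨⟨hx, hface.extremePoints_subset_extremePoints hu_ext, hux.symm,
    hface.trans hseg⟩, hugt⟩

/-- Key step: if `x` supports `c - s·v` and some point beats the line of slope `t < s`,
then there is a `v`-improving neighbor beating slope `t`. -/
lemma key_step {W : Finset (Fin n → ℝ)} (hW : W.Nonempty) {x c v : Fin n → ℝ} {s t : ℝ}
    (hx : IsVertex (convexHull ℝ (W : Set (Fin n → ℝ))) x)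
    (hts : t < s)
    (hsupp : ∀ z ∈ convexHull ℝ (W : Set (Fin n → ℝ)),
      dotR c z - dotR c x ≤ s * (dotR v z - dotR v x))
    {z₀ : Fin n → ℝ} (hz₀ : z₀ ∈ convexHull ℝ (W : Set (Fin n → ℝ)))
    (hviol : t * (dotR v z₀ - dotR v x) < dotR c z₀ - dotR c x) :
    ∃ u, ImpNbr (convexHull ℝ (W : Set (Fin n → ℝ))) v x u ∧
      t * (dotR v u - dotR v x) < dotR c u - dotR c x := by
  set m := dotR v z₀ - dotR v x with hm_def
  have hm : 0 < m := by
    by_contra hm'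
    push_neg at hm'
    have h1 : s * m ≤ t * m := mul_le_mul_of_nonpos_right hts.le hm'
    have h2 := hsupp z₀ hz₀
    rw [← hm_def] at h2
    linarith
  set r := (dotR c z₀ - dotR c x) / m with hr_def
  have hrt : t < r := (lt_div_iff₀ hm).2 (by linarith)
  have hrs : r ≤ s := (div_le_iff₀ hm).2 (hsupp z₀ hz₀)
  set t' := (t + r) / 2 with ht'_def
  have ht't : t < t' := by rw [ht'_def]; linarith
  have ht'r : t' < r := by rw [ht'_def]; linarith
  have ht's : t' < s := lt_of_lt_of_le ht'r hrs
  set w := c - t' • v with hw_def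
  have hwval : ∀ p, dotR w p = dotR c p - t' * dotR v p := fun p => by
    rw [hw_def, dotR_sub_left, dotR_smul_left]
  have hrm : r * m = dotR c z₀ - dotR c x := div_mul_cancel₀ _ (ne_of_gt hm)
  have hnotmax : ¬ ∀ z ∈ convexHull ℝ (W : Set (Fin n → ℝ)), dotR w z ≤ dotR w x := by
    intro hall
    have h1 := hall z₀ hz₀
    rw [hwval, hwval] at h1
    have h2 : t' * m < r * m := mul_lt_mul_of_pos_right ht'r hm
    rw [hrm] at h2
    rw [hm_def] at h2
    linarith
  have himp : ∃ u, ImpNbr (convexHull ℝ (W : Set (Fin n → ℝ))) w x u := by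
    by_contra h'
    push_neg at h'
    exact hnotmax (max_of_no_improving hW hx h')
  obtain ⟨u, hadj, hwlt⟩ := himp
  have hu : u ∈ convexHull ℝ (W : Set (Fin n → ℝ)) := extremePoints_subset hadj.2.1
  have hud : t' * (dotR v u - dotR v x) < dotR c u - dotR c x := by
    rw [hwval, hwval] at hwlt
    linarith
  set mu := dotR v u - dotR v x with hmu_def
  have hmu : 0 < mu := by
    by_contra hmu'
    push_neg at hmu'
    have h1 : s * mu ≤ t' * mu := mul_le_mul_of_nonpos_right ht's.le hmu'
    have h2 := hsupp u hu
    rw [← hmu_def] at h2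
    linarith
  refine ⟨u, ⟨hadj, by rw [hmu_def] at hmu; linarith⟩, ?_⟩
  have : t * mu < t' * mu := mul_lt_mul_of_pos_right ht't hmu
  rw [← hmu_def]
  linarith


/-- Lemma 3.2 (submaximum lemma): a `c`-coherent `v`-monotone (Shadow-rule) path whose
start maximizes `c` on the `v`-minimal face passes through a `c`-maximum of `Q`, and
the initial segment up to it is strictly `c`-monotone (it is strictly `v`-monotone
by definition of the path). -/
theorem shadow_path_reaches_c_max {n : ℕ} (Q : Set (Fin n → ℝ)) (hQ : IsPolytope Q)
    (c v : Fin n → ℝ) (hv : v ≠ 0) (k : ℕ) (x : ℕ → Fin n → ℝ)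
    (hpath : ShadowPath Q c v k x)
    (hmin : ∀ z ∈ Q, dotR v (x 0) ≤ dotR v z)
    (hmaxF : ∀ y ∈ Q, (∀ z ∈ Q, dotR v y ≤ dotR v z) → dotR c y ≤ dotR c (x 0)) :
    ∃ i ≤ k, (∀ y ∈ Q, dotR c y ≤ dotR c (x i)) ∧
      ∀ j < i, dotR c (x j) < dotR c (x (j + 1)) := by
  obtain ⟨V, hVne, hQeq⟩ := hQ
  subst hQeq
  obtain ⟨hvert, hstep, hlast⟩ := hpath
  have hexists : ∃ i, i = k ∨ ¬ (dotR c (x i) < dotR c (x (i + 1))) := ⟨k, Or.inl rfl⟩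
  set i0 := Nat.find hexists with hi0_def
  have hi0spec : i0 = k ∨ ¬ (dotR c (x i0) < dotR c (x (i0 + 1))) := Nat.find_spec hexists
  have hi0le : i0 ≤ k := Nat.find_le (Or.inl rfl)
  have hmono : ∀ j < i0, dotR c (x j) < dotR c (x (j + 1)) := by
    intro j hj
    have h' := Nat.find_min hexists hj
    push_neg at h'
    exact h'.2
  have hC : ∀ i, i ≤ i0 → ∃ s, 0 ≤ s ∧ ∀ z ∈ convexHull ℝ (V : Set (Fin n → ℝ)),
      dotR c z - dotR c (x i) ≤ s * (dotR v z - dotR v (x i)) := by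
    intro i
    induction i with
    | zero =>
      intro _
      by_cases hS : (V.filter (fun z => dotR v (x 0) < dotR v z)).Nonempty
      · set s := max 0 ((V.filter (fun z => dotR v (x 0) < dotR v z)).sup' hS
          (fun z => (dotR c z - dotR c (x 0)) / (dotR v z - dotR v (x 0)))) with hs_def
        refine ⟨s, le_max_left _ _, ?_⟩
        have hV0 : ∀ z ∈ V, (dotL c - s • dotL v) z ≤ dotR c (x 0) - s * dotR v (x 0) := by
          intro z hz
          have hzQ : z ∈ convexHull ℝ (V : Set (Fin n → ℝ)) :=
            subset_convexHull ℝ _ (Finset.mem_coe.2 hz)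
          have h0 := hmin z hzQ
          simp only [LinearMap.sub_apply, LinearMap.smul_apply, dotL_apply, smul_eq_mul]
          rcases h0.lt_or_eq with hlt | heq
          · have hzS : z ∈ V.filter (fun z => dotR v (x 0) < dotR v z) :=
              Finset.mem_filter.2 ⟨hz, hlt⟩
            have hle := Finset.le_sup'
              (fun z => (dotR c z - dotR c (x 0)) / (dotR v z - dotR v (x 0))) hzS
            have hle2 : (dotR c z - dotR c (x 0)) / (dotR v z - dotR v (x 0)) ≤ s :=
              le_trans hle (le_max_right _ _)
            have hden : 0 < dotR v z - dotR v (x 0) := sub_pos.2 hlt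
            have := (div_le_iff₀ hden).1 hle2
            linarith
          · have hzmin : ∀ y ∈ convexHull ℝ (V : Set (Fin n → ℝ)), dotR v z ≤ dotR v y :=
              fun y hy => heq ▸ hmin y hy
            have hcz := hmaxF z hzQ hzmin
            have hvz : dotR v z = dotR v (x 0) := heq.symm
            have hs0 : 0 ≤ s := le_max_left _ _
            nlinarith [hvz]
        intro z hz
        have := le_of_forall_le_hull (φ := dotL c - s • dotL v) hV0 z hz
        simp only [LinearMap.sub_apply, LinearMap.smul_apply, dotL_apply, smul_eq_mul] at this
        linarith
      · refine ⟨0, le_rfl, ?_⟩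
        intro z hz
        have hV0 : ∀ q ∈ V, (dotL c) q ≤ dotR c (x 0) := by
          intro q hq
          have hqQ : q ∈ convexHull ℝ (V : Set (Fin n → ℝ)) :=
            subset_convexHull ℝ _ (Finset.mem_coe.2 hq)
          have hge := hmin q hqQ
          have hnlt : ¬ dotR v (x 0) < dotR v q := fun hlt =>
            hS ⟨q, Finset.mem_filter.2 ⟨hq, hlt⟩⟩
          have heqv : dotR v q = dotR v (x 0) := le_antisymm (not_lt.1 hnlt) hge
          exact hmaxF q hqQ (fun y hy => heqv ▸ hmin y hy)
        have := le_of_forall_le_hull (φ := dotL c) hV0 z hz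
        simp only [dotL_apply] at this
        linarith
    | succ i ihi =>
      intro hle
      have hii0 : i < i0 := Nat.lt_of_lt_of_le (Nat.lt_succ_self i) hle
      obtain ⟨s, hs0, hsupp⟩ := ihi (le_of_lt hii0)
      have hik : i < k := lt_of_lt_of_le hii0 hi0le
      obtain ⟨himp, hmax⟩ := hstep i hik
      have himpc : dotR c (x i) < dotR c (x (i + 1)) := hmono i hii0
      have hΔv : 0 < dotR v (x (i + 1)) - dotR v (x i) := sub_pos.2 himp.2
      have hΔc : 0 < dotR c (x (i + 1)) - dotR c (x i) := sub_pos.2 himpc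
      have hxQ1 : x (i + 1) ∈ convexHull ℝ (V : Set (Fin n → ℝ)) :=
        extremePoints_subset (hvert (i + 1) (by omega))
      have hxvert : IsVertex (convexHull ℝ (V : Set (Fin n → ℝ))) (x i) := hvert i (by omega)
      set t := (dotR c (x (i + 1)) - dotR c (x i)) / (dotR v (x (i + 1)) - dotR v (x i))
        with ht_def
      have ht0 : 0 < t := div_pos hΔc hΔv
      have hts : t ≤ s := (div_le_iff₀ hΔv).2 (hsupp (x (i + 1)) hxQ1)
      have htmul : t * (dotR v (x (i + 1)) - dotR v (x i))
          = dotR c (x (i + 1)) - dotR c (x i) := div_mul_cancel₀ _ (ne_of_gt hΔv)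
      refine ⟨t, ht0.le, ?_⟩
      intro z hzQ
      have hkey : dotR c z - dotR c (x i) ≤ t * (dotR v z - dotR v (x i)) := by
        rcases eq_or_lt_of_le hts with heq | hlt
        · rw [heq]; exact hsupp z hzQ
        · by_contra hviol
          push_neg at hviol
          obtain ⟨u, huimp, hugt⟩ := key_step hVne hxvert hlt hsupp hzQ hviol
          have hslope := hmax u huimp
          have hmu : 0 < dotR v (u - x i) := by
            rw [dotR_sub]; linarith [huimp.2]
          have h2 : dotR c (x (i + 1) - x i) / dotR v (x (i + 1) - x i) = t := by
            rw [dotR_sub, dotR_sub, ht_def]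
          rw [h2] at hslope
          have h1 : dotR c (u - x i) ≤ t * dotR v (u - x i) := (div_le_iff₀ hmu).1 hslope
          rw [dotR_sub c u (x i), dotR_sub v u (x i)] at h1
          linarith
      linarith
  obtain ⟨s, hs0, hsupp⟩ := hC i0 le_rfl
  refine ⟨i0, hi0le, ?_, hmono⟩
  by_contra hcon
  push_neg at hcon
  obtain ⟨z, hzQ, hzgt⟩ := hcon
  have hxvert : IsVertex (convexHull ℝ (V : Set (Fin n → ℝ))) (x i0) := hvert i0 hi0le
  have hspos : 0 < s := by
    rcases hs0.lt_or_eq with h | h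
    · exact h
    · exfalso
      have h' := hsupp z hzQ
      rw [← h, zero_mul] at h'
      linarith
  have hviol : (0 : ℝ) * (dotR v z - dotR v (x i0)) < dotR c z - dotR c (x i0) := by
    rw [zero_mul]; linarith
  obtain ⟨u, huimp, hugt⟩ := key_step hVne hxvert hspos hsupp hzQ hviol
  rw [zero_mul] at hugt
  by_cases hik : i0 = k
  · exact hlast u (hik ▸ huimp)
  · have hik' : i0 < k := lt_of_le_of_ne hi0le hik
    rcases hi0spec with h | h
    · exact hik h
    obtain ⟨himp, hmax⟩ := hstep i0 hik'
    have hΔv : 0 < dotR v (x (i0 + 1)) - dotR v (x i0) := sub_pos.2 himp.2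
    have hΔc : dotR c (x (i0 + 1)) - dotR c (x i0) ≤ 0 := by
      have := not_lt.1 h
      linarith
    have hmu : 0 < dotR v (u - x i0) := by
      rw [dotR_sub]; linarith [huimp.2]
    have hslope := hmax u huimp
    have hstep_nonpos : dotR c (x (i0 + 1) - x i0) / dotR v (x (i0 + 1) - x i0) ≤ 0 := by
      rw [dotR_sub, dotR_sub]
      exact div_nonpos_of_nonpos_of_nonneg (by linarith) (by linarith)
    have h2 := le_trans hslope hstep_nonpos
    have h1 : dotR c (u - x i0) ≤ 0 := by
      have := (div_le_iff₀ hmu).1 h2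
      linarith
    rw [dotR_sub] at h1
    linarith
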